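/- arXiv:2305.17536 — 2 statements merged into one kernel-verified Lean document; each statement's English description precedes it below -/
import Mathlib

section
/- Let m and n be integers with 3 ≤ m ≤ n such that at least one of m and n is even. Then the lid-chromatic number of the tensor product of the cycles C_m and C_n satisfies χ_lid(C_m × C_n) = 3. -/
open SimpleGraph

/-- The closed neighborhood of a vertex: the vertex together with its neighbors. -/
def SimpleGraph.closedNbhd {V : Type*} (G : SimpleGraph V) (v : V) : Set V :=
  insert v (G.neighborSet v)

/-- A coloring `f` is a locally identifying coloring of `G` if it is proper and, for every
edge `uw` whose endpoints have distinct closed neighborhoods, the sets of colors appearing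
on the two closed neighborhoods are distinct. -/
def SimpleGraph.IsLidColoring {V α : Type*} (G : SimpleGraph V) (f : V → α) : Prop :=
  (∀ ⦃u w⦄, G.Adj u w → f u ≠ f w) ∧
  (∀ ⦃u w⦄, G.Adj u w → G.closedNbhd u ≠ G.closedNbhd w →
    f '' G.closedNbhd u ≠ f '' G.closedNbhd w)

/-- `G` admits a locally identifying coloring with `k` colors. -/
def SimpleGraph.LidColorable {V : Type*} (G : SimpleGraph V) (k : ℕ) : Prop :=
  ∃ f : V → Fin k, G.IsLidColoring f

/-- The lid-chromatic number of `G`: the least number of colors in a lid-coloring of `G`. -/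
noncomputable def SimpleGraph.lidChromaticNumber {V : Type*} (G : SimpleGraph V) : ℕ∞ :=
  ⨅ k ∈ {k : ℕ | G.LidColorable k}, (k : ℕ∞)

/-- The tensor (categorical/Kronecker) product of two simple graphs. -/
def SimpleGraph.tensorProd {α β : Type*} (G : SimpleGraph α) (H : SimpleGraph β) :
    SimpleGraph (α × β) where
  Adj x y := G.Adj x.1 y.1 ∧ H.Adj x.2 y.2
  symm := ⟨fun _ _ h => ⟨h.1.symm, h.2.symm⟩⟩
  loopless := ⟨fun x h => G.loopless.irrefl x.1 h.1⟩

/-! ### Auxiliary material for the proof -/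

namespace LidAux

/-! #### Arithmetic row predicates -/

def Bs (k x : ℕ) : Prop := (x % 4 < 2 ∧ x < 4*(k/4)) ∨ (k = 3 ∧ x = 0)
def Cs (k x : ℕ) : Prop := (k % 4 = 1 ∧ x+1 = k) ∨ (k % 4 = 2 ∧ k ≤ x+2) ∨
        (k % 4 = 3 ∧ 3 < k ∧ (x+3 = k ∨ x+2 = k)) ∨ (k = 3 ∧ x = 1)

instance (k x : ℕ) : Decidable (Bs k x) := by unfold Bs; infer_instance
instance (k x : ℕ) : Decidable (Cs k x) := by unfold Cs; infer_instance

lemma ib {k x y : ℕ} (hx : x < k) (hy : y < k)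
    (hrel : y = x + 2 ∨ x + 2 = y + k) : ¬(Bs k x ∧ Bs k y) := by
  unfold Bs; omega

lemma ic {k x y : ℕ} (hk : 3 ≤ k) (hx : x < k) (hy : y < k)
    (hrel : y = x + 2 ∨ x + 2 = y + k) : ¬(Cs k x ∧ Cs k y) := by
  unfold Cs; omega

lemma cov {k x y : ℕ} (hk : 3 ≤ k) (hx : x < k) (hy : y < k)
    (hrel : y = x + 2 ∨ x + 2 = y + k) :
    Bs k x ∨ Bs k y ∨ Cs k x ∨ Cs k y := by
  by_cases hk3 : k = 3
  · subst hk3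
    interval_cases x
    · exact Or.inl (Or.inr ⟨rfl, rfl⟩)
    · exact Or.inr (Or.inr (Or.inl (Or.inr (Or.inr (Or.inr ⟨rfl, rfl⟩)))))
    · have hy1 : y = 1 := by omega
      exact Or.inr (Or.inr (Or.inr (Or.inr (Or.inr (Or.inr ⟨rfl, hy1⟩)))))
  · have hk4 : 4 ≤ k := by omega
    have h4 := Nat.div_add_mod k 4
    have h4' := Nat.div_add_mod x 4
    have h4'' := Nat.div_add_mod y 4
    have hx4 : x % 4 < 4 := Nat.mod_lt _ (by omega)
    have hy4 : y % 4 < 4 := Nat.mod_lt _ (by omega)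
    have hq1 : 1 ≤ k/4 := by omega
    rcases hrel with h | h
    · by_cases hbx : x % 4 < 2 ∧ x < 4*(k/4)
      · exact Or.inl (Or.inl hbx)
      · by_cases hby : y % 4 < 2 ∧ y < 4*(k/4)
        · exact Or.inr (Or.inl (Or.inl hby))
        · right; right
          rcases (by omega : k%4 = 0 ∨ k%4 = 1 ∨ k%4 = 2 ∨ k%4 = 3) with h0|h1|h2|h3
          · exfalso
            have hmod : y % 4 = (x % 4 + 2) % 4 := by omega
            omega
          · right
            refine Or.inl ⟨h1, ?_⟩
            have hmod : y % 4 = (x % 4 + 2) % 4 := by omega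
            omega
          · right
            refine Or.inr (Or.inl ⟨h2, ?_⟩)
            have hmod : y % 4 = (x % 4 + 2) % 4 := by omega
            omega
          · have hmod : y % 4 = (x % 4 + 2) % 4 := by omega
            by_cases hylast : y + 1 = k
            · exact Or.inl (Or.inr (Or.inr (Or.inl ⟨h3, by omega, Or.inl (by omega)⟩)))
            · right
              refine Or.inr (Or.inr (Or.inl ⟨h3, by omega, ?_⟩))
              omega
    · refine Or.inr (Or.inl (Or.inl ⟨by omega, by omega⟩))

def Pc (k r x : ℕ) : Prop := r = 0 ∨ (r = 1 ∧ Bs k x) ∨ (2 ≤ r ∧ Cs k x)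

instance (k r x : ℕ) : Decidable (Pc k r x) := by unfold Pc; infer_instance

lemma pc0 {k x : ℕ} : Pc k 0 x := Or.inl rfl

lemma pc1 {k x : ℕ} (h : Pc k 1 x) : Bs k x := by
  rcases h with h | ⟨_, h⟩ | ⟨h, _⟩
  · exact absurd h (by omega)
  · exact h
  · exact absurd h (by omega)

lemma pc2 {k x : ℕ} (h : Pc k 2 x) : Cs k x := by
  rcases h with h | ⟨h, _⟩ | ⟨_, h⟩
  · exact absurd h (by omega)
  · exact absurd h (by omega)
  · exact h

lemma pc1' {k x : ℕ} (h : ¬ Pc k 1 x) : ¬ Bs k x := fun hb => h (Or.inr (Or.inl ⟨rfl, hb⟩))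
lemma pc2' {k x : ℕ} (h : ¬ Pc k 2 x) : ¬ Cs k x := fun hc => h (Or.inr (Or.inr ⟨by omega, hc⟩))

lemma pcore {k r r' x y : ℕ} (hk : 3 ≤ k) (hx : x < k) (hy : y < k)
    (hrel : y = x + 2 ∨ x + 2 = y + k) (hr : r < 3) (hr' : r' < 3) (hne : r ≠ r') :
    ¬((Pc k r x ∧ Pc k r' x ∧ Pc k r y ∧ Pc k r' y) ∨
      (¬Pc k r x ∧ ¬Pc k r' x ∧ ¬Pc k r y ∧ ¬Pc k r' y)) := by
  rintro (⟨p1, p2, p3, p4⟩ | ⟨n1, n2, n3, n4⟩)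
  · interval_cases r <;> interval_cases r' <;> try omega
    · exact ib hx hy hrel ⟨pc1 p2, pc1 p4⟩
    · exact ic hk hx hy hrel ⟨pc2 p2, pc2 p4⟩
    · exact ib hx hy hrel ⟨pc1 p1, pc1 p3⟩
    · exact ic hk hx hy hrel ⟨pc2 p2, pc2 p4⟩
    · exact ic hk hx hy hrel ⟨pc2 p1, pc2 p3⟩
    · exact ic hk hx hy hrel ⟨pc2 p1, pc2 p3⟩
  · interval_cases r <;> interval_cases r' <;> try omega
    · exact n1 pc0
    · exact n1 pc0
    · exact n2 pc0
    · rcases cov hk hx hy hrel with hc | hc | hc | hc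
      · exact pc1' n1 hc
      · exact pc1' n3 hc
      · exact pc2' n2 hc
      · exact pc2' n4 hc
    · exact n2 pc0
    · rcases cov hk hx hy hrel with hc | hc | hc | hc
      · exact pc1' n2 hc
      · exact pc1' n4 hc
      · exact pc2' n1 hc
      · exact pc2' n3 hc

def rowVal (k r x : ℕ) : Fin 3 := if Pc k r x then 1 else 2

lemma rowVal_ne_zero {k r x : ℕ} : rowVal k r x ≠ 0 := by
  unfold rowVal; split <;> decide

lemma rowVal_cases {k r x : ℕ} : rowVal k r x = 1 ∨ rowVal k r x = 2 := by
  unfold rowVal; split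
  · exact Or.inl rfl
  · exact Or.inr rfl

lemma rowVal_inj {k r x r' y : ℕ} (h : rowVal k r x = rowVal k r' y) :
    Pc k r x ↔ Pc k r' y := by
  unfold rowVal at h
  by_cases h1 : Pc k r x <;> by_cases h2 : Pc k r' y
  · exact iff_of_true h1 h2
  · rw [if_pos h1, if_neg h2] at h; exact absurd h (by decide)
  · rw [if_neg h1, if_pos h2] at h; exact absurd h (by decide)
  · exact iff_of_false h1 h2

lemma notAll {k r r' x y : ℕ} (hk : 3 ≤ k) (hx : x < k) (hy : y < k)
    (hrel : y = x + 2 ∨ x + 2 = y + k) (hr : r < 3) (hr' : r' < 3) (hne : r ≠ r') :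
    ¬(rowVal k r x = rowVal k r' x ∧ rowVal k r x = rowVal k r y ∧
      rowVal k r x = rowVal k r' y) := by
  rintro ⟨e1, e2, e3⟩
  have i2 := rowVal_inj e1
  have i3 := rowVal_inj e2
  have i4 := rowVal_inj e3
  refine pcore hk hx hy hrel hr hr' hne ?_
  by_cases h : Pc k r x
  · exact Or.inl ⟨h, i2.mp h, i3.mp h, i4.mp h⟩
  · exact Or.inr ⟨h, fun a => h (i2.mpr a), fun a => h (i3.mpr a), fun a => h (i4.mpr a)⟩

lemma exists_d {k r r' x y : ℕ} (hk : 3 ≤ k) (hx : x < k) (hy : y < k)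
    (hrel : y = x + 2 ∨ x + 2 = y + k) (hr : r < 3) (hr' : r' < 3) (hne : r ≠ r')
    {d : Fin 3} (hd : d ≠ 0) :
    rowVal k r x = d ∨ rowVal k r y = d ∨ rowVal k r' x = d ∨ rowVal k r' y = d := by
  by_contra hcon
  push_neg at hcon
  obtain ⟨m1, m2, m3, m4⟩ := hcon
  have fin3 : ∀ v w d : Fin 3, v ≠ 0 → w ≠ 0 → d ≠ 0 → v ≠ d → w ≠ d → v = w := by
    intro v w d hv hw hd1 hvd hwd
    fin_cases v <;> fin_cases w <;> fin_cases d <;> simp_all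
  refine notAll hk hx hy hrel hr hr' hne ⟨?_, ?_, ?_⟩
  · exact fin3 _ _ _ rowVal_ne_zero rowVal_ne_zero hd m1 m3
  · exact fin3 _ _ _ rowVal_ne_zero rowVal_ne_zero hd m1 m2
  · exact fin3 _ _ _ rowVal_ne_zero rowVal_ne_zero hd m1 m4

/-! #### Row selector -/

def selr (M t : ℕ) : ℕ := if M % 2 = 1 ∧ t + 1 = M then 2 else t % 2

lemma selr_lt {M t : ℕ} : selr M t < 3 := by unfold selr; split <;> omega

lemma selr_ne {M t t' : ℕ} (hM : 2 ≤ M) (ht : t < M)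
    (htt : t' = t + 1 ∨ (t + 1 = M ∧ t' = 0)) : selr M t ≠ selr M t' := by
  unfold selr; split_ifs <;> omega

/-! #### Fin helpers -/

section FinHelp
variable {m : ℕ} [NeZero m]

lemma val_one_of (hm : 3 ≤ m) : ((1 : Fin m) : ℕ) = 1 := by
  rw [Fin.val_one']
  exact Nat.mod_eq_of_lt (by omega)

lemma val_add_one (hm : 3 ≤ m) (u : Fin m) :
    ((u + 1 : Fin m) : ℕ) = if u.val + 1 = m then 0 else u.val + 1 := by
  have hu := u.isLt
  rw [Fin.add_def]
  show (u.val + ((1 : Fin m) : ℕ)) % m = _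
  rw [val_one_of hm]
  split
  · rename_i h
    rw [h, Nat.mod_self]
  · exact Nat.mod_eq_of_lt (by omega)

lemma val_sub_one (hm : 3 ≤ m) (u : Fin m) :
    ((u - 1 : Fin m) : ℕ) = if u.val = 0 then m - 1 else u.val - 1 := by
  have hu := u.isLt
  have hw := (u - 1 : Fin m).isLt
  have heq := congrArg Fin.val (sub_add_cancel u 1)
  rw [val_add_one hm (u - 1)] at heq
  split at heq <;> split <;> omega

lemma cycle_adj_iff (hm : 3 ≤ m) {u v : Fin m} :
    (cycleGraph m).Adj u v ↔ (u = v + 1 ∨ v = u + 1) := by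
  rw [cycleGraph_adj']
  have h1 : ∀ w z : Fin m, (w - z).val = 1 ↔ w = z + 1 := by
    intro w z
    rw [show (1 : ℕ) = ((1 : Fin m) : ℕ) from (val_one_of hm).symm, Fin.val_eq_val,
      sub_eq_iff_eq_add, add_comm]
  rw [h1, h1]

lemma cycle_adj_succ (hm : 3 ≤ m) (u : Fin m) : (cycleGraph m).Adj u (u + 1) :=
  (cycle_adj_iff hm).mpr (Or.inr rfl)

lemma cycle_adj_pred (hm : 3 ≤ m) (u : Fin m) : (cycleGraph m).Adj u (u - 1) :=
  (cycle_adj_iff hm).mpr (Or.inl (sub_add_cancel u 1).symm)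

lemma cycle_adj_val (hm : 3 ≤ m) {u v : Fin m} (h : (cycleGraph m).Adj u v) :
    u.val = v.val + 1 ∨ v.val = u.val + 1 ∨ (u.val + 1 = m ∧ v.val = 0) ∨
      (v.val + 1 = m ∧ u.val = 0) := by
  rcases (cycle_adj_iff hm).mp h with h | h
  · have hh := congrArg Fin.val h
    rw [val_add_one hm v] at hh
    have hv := v.isLt
    split at hh <;> omega
  · have hh := congrArg Fin.val h
    rw [val_add_one hm u] at hh
    have hu := u.isLt
    split at hh <;> omega

end FinHelp

/-! #### The coloring -/

def colF (a b : ℕ) (p : Fin a × Fin b) : Fin 3 :=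
  if p.1.val % 2 = 0 then 0 else rowVal b (selr (a/2) (p.1.val/2)) p.2.val

lemma colF_even {a b : ℕ} {p : Fin a × Fin b} (h : p.1.val % 2 = 0) : colF a b p = 0 := by
  unfold colF; rw [if_pos h]

lemma colF_odd {a b : ℕ} {p : Fin a × Fin b} (h : ¬ p.1.val % 2 = 0) :
    colF a b p = rowVal b (selr (a/2) (p.1.val/2)) p.2.val := by
  unfold colF; rw [if_neg h]

lemma mem_closedNbhd {V : Type*} (G : SimpleGraph V) (u v : V) :
    v ∈ G.closedNbhd u ↔ v = u ∨ G.Adj u v := by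
  simp [SimpleGraph.closedNbhd]

lemma parity_flip {a : ℕ} [NeZero a] (ha : 3 ≤ a) (hae : a % 2 = 0) {u v : Fin a}
    (h : (cycleGraph a).Adj u v) : u.val % 2 ≠ v.val % 2 := by
  have := cycle_adj_val ha h
  have hu := u.isLt
  have hv := v.isLt
  omega

end LidAux

namespace LidAux

lemma key {a b : ℕ} (ha : 4 ≤ a) (hae : a % 2 = 0) (hb : 3 ≤ b)
    {u w : Fin a × Fin b}
    (hadj : ((cycleGraph a).tensorProd (cycleGraph b)).Adj u w)
    (hu : u.1.val % 2 = 0) :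
    colF a b '' ((cycleGraph a).tensorProd (cycleGraph b)).closedNbhd u ≠
    colF a b '' ((cycleGraph a).tensorProd (cycleGraph b)).closedNbhd w := by
  haveI : NeZero a := ⟨by omega⟩
  haveI : NeZero b := ⟨by omega⟩
  have ha3 : 3 ≤ a := by omega
  set G := (cycleGraph a).tensorProd (cycleGraph b) with hG
  have hadj1 : (cycleGraph a).Adj u.1 w.1 := hadj.1
  have hw : ¬ w.1.val % 2 = 0 := fun h => parity_flip ha3 hae hadj1 (by omega)
  set c := colF a b w with hcdef
  have hcrow : c = rowVal b (selr (a/2) (w.1.val/2)) w.2.val := colF_odd hw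
  have hc12 : c = 1 ∨ c = 2 := by rw [hcrow]; exact rowVal_cases
  set d : Fin 3 := if c = 1 then 2 else 1 with hd
  have hd0 : d ≠ 0 := by rw [hd]; split <;> decide
  have hdc : d ≠ c := by
    rcases hc12 with h | h
    · rw [hd, if_pos h, h]; decide
    · rw [hd, if_neg (by rw [h]; decide), h]; decide
  -- values around u
  have hiv := u.1.isLt
  have hjv := u.2.isLt
  have hsub := val_sub_one ha3 u.1
  have hadd := val_add_one ha3 u.1
  have hjsub := val_sub_one hb u.2
  have hjadd := val_add_one hb u.2
  have hx : (u.2 - 1 : Fin b).val < b := (u.2 - 1 : Fin b).isLt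
  have hy : (u.2 + 1 : Fin b).val < b := (u.2 + 1 : Fin b).isLt
  have hrel : (u.2 + 1 : Fin b).val = (u.2 - 1 : Fin b).val + 2 ∨
      (u.2 - 1 : Fin b).val + 2 = (u.2 + 1 : Fin b).val + b := by
    split at hjsub <;> split at hjadd <;> omega
  have ht : (u.1 - 1 : Fin a).val / 2 < a / 2 := by
    split at hsub <;> omega
  have htt : (u.1 + 1 : Fin a).val / 2 = (u.1 - 1 : Fin a).val / 2 + 1 ∨
      ((u.1 - 1 : Fin a).val / 2 + 1 = a / 2 ∧ (u.1 + 1 : Fin a).val / 2 = 0) := by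
    split at hsub <;> split at hadd <;> omega
  have hrne : selr (a/2) ((u.1 - 1 : Fin a).val / 2) ≠ selr (a/2) ((u.1 + 1 : Fin a).val / 2) :=
    selr_ne (by omega) ht htt
  have hD := exists_d (r := selr (a/2) ((u.1 - 1 : Fin a).val / 2))
    (r' := selr (a/2) ((u.1 + 1 : Fin a).val / 2))
    hb hx hy hrel selr_lt selr_lt hrne hd0
  -- parity of neighbor rows
  have hodd1 : ¬ (u.1 - 1 : Fin a).val % 2 = 0 := by split at hsub <;> omega
  have hodd2 : ¬ (u.1 + 1 : Fin a).val % 2 = 0 := by split at hadd <;> omega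
  -- d is in the image of N[u]
  have claim1 : d ∈ colF a b '' G.closedNbhd u := by
    rcases hD with hcase | hcase | hcase | hcase
    · exact ⟨(u.1 - 1, u.2 - 1), (mem_closedNbhd G u _).mpr
        (Or.inr ⟨cycle_adj_pred ha3 u.1, cycle_adj_pred hb u.2⟩),
        by rw [colF_odd hodd1]; exact hcase⟩
    · exact ⟨(u.1 - 1, u.2 + 1), (mem_closedNbhd G u _).mpr
        (Or.inr ⟨cycle_adj_pred ha3 u.1, cycle_adj_succ hb u.2⟩),
        by rw [colF_odd hodd1]; exact hcase⟩
    · exact ⟨(u.1 + 1, u.2 - 1), (mem_closedNbhd G u _).mpr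
        (Or.inr ⟨cycle_adj_succ ha3 u.1, cycle_adj_pred hb u.2⟩),
        by rw [colF_odd hodd2]; exact hcase⟩
    · exact ⟨(u.1 + 1, u.2 + 1), (mem_closedNbhd G u _).mpr
        (Or.inr ⟨cycle_adj_succ ha3 u.1, cycle_adj_succ hb u.2⟩),
        by rw [colF_odd hodd2]; exact hcase⟩
  have claim2 : d ∉ colF a b '' G.closedNbhd w := by
    rintro ⟨v, hv, hfv⟩
    rcases (mem_closedNbhd G w v).mp hv with rfl | hvadj
    · exact hdc hfv.symm
    · have : v.1.val % 2 = 0 := by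
        have := parity_flip ha3 hae (hvadj.1 : (cycleGraph a).Adj w.1 v.1)
        omega
      rw [colF_even this] at hfv
      exact hd0 hfv.symm
  intro hEq
  exact claim2 (hEq ▸ claim1)

lemma upper {a b : ℕ} (ha : 4 ≤ a) (hae : a % 2 = 0) (hb : 3 ≤ b) :
    ((cycleGraph a).tensorProd (cycleGraph b)).IsLidColoring (colF a b) := by
  haveI : NeZero a := ⟨by omega⟩
  haveI : NeZero b := ⟨by omega⟩
  have ha3 : 3 ≤ a := by omega
  constructor
  · intro u w hadj
    have h1 := parity_flip ha3 hae (hadj.1 : (cycleGraph a).Adj u.1 w.1)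
    by_cases hu : u.1.val % 2 = 0
    · rw [colF_even hu, colF_odd (by omega)]
      exact Ne.symm rowVal_ne_zero
    · rw [colF_odd hu, colF_even (by omega)]
      exact rowVal_ne_zero
  · intro u w hadj _
    by_cases hu : u.1.val % 2 = 0
    · exact key ha hae hb hadj hu
    · have h1 := parity_flip ha3 hae (hadj.1 : (cycleGraph a).Adj u.1 w.1)
      exact (key ha hae hb hadj.symm (by omega)).symm

lemma swap_lid {α β : Type*} {G : SimpleGraph α} {H : SimpleGraph β} {c : ℕ}
    (h : (H.tensorProd G).LidColorable c) : (G.tensorProd H).LidColorable c := by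
  obtain ⟨F, hF1, hF2⟩ := h
  have hmem : ∀ (p : α × β) (q : β × α),
      q ∈ (H.tensorProd G).closedNbhd p.swap ↔ q.swap ∈ (G.tensorProd H).closedNbhd p := by
    intro p q
    rw [mem_closedNbhd, mem_closedNbhd]
    constructor
    · rintro (rfl | hadj)
      · exact Or.inl rfl
      · exact Or.inr ⟨hadj.2, hadj.1⟩
    · rintro (hq | hadj)
      · left
        exact Prod.ext (congrArg Prod.snd hq) (congrArg Prod.fst hq)
      · exact Or.inr ⟨hadj.2, hadj.1⟩
  have himg : ∀ p : α × β,
      (F ∘ Prod.swap) '' (G.tensorProd H).closedNbhd p =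
        F '' (H.tensorProd G).closedNbhd p.swap := by
    intro p
    ext z
    constructor
    · rintro ⟨v, hv, rfl⟩
      exact ⟨v.swap, (hmem p v.swap).mpr (by simpa using hv), rfl⟩
    · rintro ⟨q, hq, rfl⟩
      exact ⟨q.swap, (hmem p q).mp hq, rfl⟩
  refine ⟨F ∘ Prod.swap, fun u w hadj => hF1 ⟨hadj.2, hadj.1⟩, fun u w hadj hN => ?_⟩
  rw [himg u, himg w]
  refine hF2 ⟨hadj.2, hadj.1⟩ fun hEq => hN ?_
  ext q
  have h1 := hmem u q.swap
  have h2 := hmem w q.swap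
  simp only [Prod.swap_swap] at h1 h2
  rw [← h1, ← h2, hEq]

lemma lower {m n k : ℕ} (hm : 3 ≤ m) (hn : 3 ≤ n) (h33 : ¬(m = 3 ∧ n = 3))
    (hcol : ((cycleGraph m).tensorProd (cycleGraph n)).LidColorable k) : 3 ≤ k := by
  haveI : NeZero m := ⟨by omega⟩
  haveI : NeZero n := ⟨by omega⟩
  obtain ⟨f, hf1, hf2⟩ := hcol
  set G := (cycleGraph m).tensorProd (cycleGraph n) with hG
  set u : Fin m × Fin n := (⟨0, by omega⟩, ⟨0, by omega⟩) with hu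
  set w : Fin m × Fin n := (⟨1, by omega⟩, ⟨1, by omega⟩) with hw
  have hadjm : (cycleGraph m).Adj u.1 w.1 := by
    refine (cycle_adj_iff hm).mpr (Or.inr ?_)
    apply Fin.ext
    rw [val_add_one hm]
    simp only [hu, hw]
    split <;> omega
  have hadjn : (cycleGraph n).Adj u.2 w.2 := by
    refine (cycle_adj_iff hn).mpr (Or.inr ?_)
    apply Fin.ext
    rw [val_add_one hn]
    simp only [hu, hw]
    split <;> omega
  have hadj : G.Adj u w := ⟨hadjm, hadjn⟩
  have hne := hf1 hadj
  rcases Nat.lt_or_ge k 3 with hk | hk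
  · exfalso
    interval_cases k
    · exact (f u).elim0
    · exact hne (Subsingleton.elim _ _)
    · -- k = 2 : derive contradiction from the lid property
      set z : Fin m × Fin n := (⟨m-1, by omega⟩, ⟨n-1, by omega⟩) with hz
      have hzu : z ∈ G.closedNbhd u := by
        refine (mem_closedNbhd G u z).mpr (Or.inr ⟨?_, ?_⟩)
        · refine (cycle_adj_iff hm).mpr (Or.inl ?_)
          apply Fin.ext
          rw [val_add_one hm]
          simp only [hu, hz]
          split <;> omega
        · refine (cycle_adj_iff hn).mpr (Or.inl ?_)
          apply Fin.ext
          rw [val_add_one hn]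
          simp only [hu, hz]
          split <;> omega
      have hzw : z ∉ G.closedNbhd w := by
        intro hmem
        rcases (mem_closedNbhd G w z).mp hmem with h | h
        · have h1 := congrArg (fun p => (Prod.fst p).val) h
          simp only [hz, hw] at h1
          omega
        · have h1 := cycle_adj_val hm (h.1 : (cycleGraph m).Adj w.1 z.1)
          have h2 := cycle_adj_val hn (h.2 : (cycleGraph n).Adj w.2 z.2)
          simp only [hz, hw] at h1 h2
          omega
      have hN : G.closedNbhd u ≠ G.closedNbhd w := fun hEq => hzw (hEq ▸ hzu)
      have himg := hf2 hadj hN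
      apply himg
      have hall : ∀ c : Fin 2, c = f u ∨ c = f w := by
        intro c
        have : ∀ a b c : Fin 2, a ≠ b → c = a ∨ c = b := by decide
        exact this _ _ c hne
      ext cc
      constructor
      · rintro ⟨v, _, rfl⟩
        rcases hall (f v) with h | h
        · exact h ▸ ⟨u, (mem_closedNbhd G w u).mpr (Or.inr hadj.symm), rfl⟩
        · exact h ▸ ⟨w, (mem_closedNbhd G w w).mpr (Or.inl rfl), rfl⟩
      · rintro ⟨v, _, rfl⟩
        rcases hall (f v) with h | h
        · exact h ▸ ⟨u, (mem_closedNbhd G u u).mpr (Or.inl rfl), rfl⟩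
        · exact h ▸ ⟨w, (mem_closedNbhd G u w).mpr (Or.inr hadj), rfl⟩
  · exact hk

end LidAux

/-- For `3 ≤ m ≤ n` with at least one of `m`, `n` even, `χ_lid(C_m × C_n) = 3`. -/
theorem lid_stmt_17 (m n : ℕ) (hm : 3 ≤ m) (hmn : m ≤ n) (heven : Even m ∨ Even n) :
    ((cycleGraph m).tensorProd (cycleGraph n)).lidChromaticNumber = 3 := by
  have hn : 3 ≤ n := hm.trans hmn
  have hev : m % 2 = 0 ∨ n % 2 = 0 := by
    rcases heven with h | h
    · exact Or.inl (Nat.even_iff.mp h)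
    · exact Or.inr (Nat.even_iff.mp h)
  have h33 : ¬(m = 3 ∧ n = 3) := by rintro ⟨rfl, rfl⟩; omega
  have hcol3 : ((cycleGraph m).tensorProd (cycleGraph n)).LidColorable 3 := by
    by_cases hme : m % 2 = 0
    · exact ⟨LidAux.colF m n, LidAux.upper (by omega) hme hn⟩
    · have hnev : n % 2 = 0 := by omega
      exact LidAux.swap_lid ⟨LidAux.colF n m, LidAux.upper (by omega) hnev hm⟩
  unfold SimpleGraph.lidChromaticNumber
  apply le_antisymm
  · have h := iInf₂_le (f := fun (k : ℕ) (_ : k ∈ {k : ℕ |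
      ((cycleGraph m).tensorProd (cycleGraph n)).LidColorable k}) => (k : ℕ∞)) 3 hcol3
    simpa using h
  · refine le_iInf₂ fun k hk => ?_
    have h3k := LidAux.lower hm hn h33 hk
    exact_mod_cast h3k
end

section
/- Let m ≥ 9 and n ≥ 3 be odd integers. Then the lid-chromatic number of the tensor product of the cycles C_m and C_n satisfies χ_lid(C_m × C_n) = 4. -/
open SimpleGraph
open scoped Fin.NatCast Fin.CommRing

/-! ### Auxiliary definitions for the upper bound coloring -/

/-- The basic periodic pattern `0,1,0,2` used for the first-coordinate coloring. -/
def lidPat (j : ℕ) : Fin 4 :=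
  if j % 4 = 0 then 0 else if j % 4 = 1 then 1 else if j % 4 = 2 then 0 else 2

/-- The coloring sequence on `C_m`: the periodic pattern `0,1,0,2` with a tail patch of
length `5` (when `m % 4 = 1`) or `7` (when `m % 4 = 3`). -/
def lidSeq (m j : ℕ) : Fin 4 :=
  if m % 4 = 1 then
    if m - j = 1 then 3 else if m - j = 2 then 2 else if m - j = 3 then 3
    else if m - j = 4 then 1 else if m - j = 5 then 0 else lidPat j
  else
    if m - j = 1 then 3 else if m - j = 2 then 0 else if m - j = 3 then 2
    else if m - j = 4 then 1 else if m - j = 5 then 3 else if m - j = 6 then 1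
    else if m - j = 7 then 0 else lidPat j

lemma lidPat_0 (j : ℕ) (h : j % 4 = 0) : lidPat j = 0 := by simp [lidPat, h]
lemma lidPat_1 (j : ℕ) (h : j % 4 = 1) : lidPat j = 1 := by simp [lidPat, h]
lemma lidPat_2 (j : ℕ) (h : j % 4 = 2) : lidPat j = 0 := by simp [lidPat, h]
lemma lidPat_3 (j : ℕ) (h : j % 4 = 3) : lidPat j = 2 := by simp [lidPat, h]
lemma lidSeq_pat1 (m j : ℕ) (h : m % 4 = 1) (hb : 5 < m - j) : lidSeq m j = lidPat j := by
  simp [lidSeq, h, show m - j ≠ 1 from by omega, show m - j ≠ 2 from by omega, show m - j ≠ 3 from by omega, show m - j ≠ 4 from by omega, show m - j ≠ 5 from by omega]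
lemma lidSeq_pat3 (m j : ℕ) (h : m % 4 = 3) (hb : 7 < m - j) : lidSeq m j = lidPat j := by
  simp [lidSeq, show m % 4 ≠ 1 from by omega, show m - j ≠ 1 from by omega, show m - j ≠ 2 from by omega, show m - j ≠ 3 from by omega, show m - j ≠ 4 from by omega, show m - j ≠ 5 from by omega, show m - j ≠ 6 from by omega, show m - j ≠ 7 from by omega]
lemma lidSeq_t1_1 (m j : ℕ) (h : m % 4 = 1) (hd : m - j = 1) : lidSeq m j = 3 := by simp [lidSeq, h, hd]
lemma lidSeq_t1_2 (m j : ℕ) (h : m % 4 = 1) (hd : m - j = 2) : lidSeq m j = 2 := by simp [lidSeq, h, hd]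
lemma lidSeq_t1_3 (m j : ℕ) (h : m % 4 = 1) (hd : m - j = 3) : lidSeq m j = 3 := by simp [lidSeq, h, hd]
lemma lidSeq_t1_4 (m j : ℕ) (h : m % 4 = 1) (hd : m - j = 4) : lidSeq m j = 1 := by simp [lidSeq, h, hd]
lemma lidSeq_t1_5 (m j : ℕ) (h : m % 4 = 1) (hd : m - j = 5) : lidSeq m j = 0 := by simp [lidSeq, h, hd]
lemma lidSeq_t3_1 (m j : ℕ) (h : m % 4 = 3) (hd : m - j = 1) : lidSeq m j = 3 := by simp [lidSeq, show m % 4 ≠ 1 from by omega, hd]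
lemma lidSeq_t3_2 (m j : ℕ) (h : m % 4 = 3) (hd : m - j = 2) : lidSeq m j = 0 := by simp [lidSeq, show m % 4 ≠ 1 from by omega, hd]
lemma lidSeq_t3_3 (m j : ℕ) (h : m % 4 = 3) (hd : m - j = 3) : lidSeq m j = 2 := by simp [lidSeq, show m % 4 ≠ 1 from by omega, hd]
lemma lidSeq_t3_4 (m j : ℕ) (h : m % 4 = 3) (hd : m - j = 4) : lidSeq m j = 1 := by simp [lidSeq, show m % 4 ≠ 1 from by omega, hd]
lemma lidSeq_t3_5 (m j : ℕ) (h : m % 4 = 3) (hd : m - j = 5) : lidSeq m j = 3 := by simp [lidSeq, show m % 4 ≠ 1 from by omega, hd]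
lemma lidSeq_t3_6 (m j : ℕ) (h : m % 4 = 3) (hd : m - j = 6) : lidSeq m j = 1 := by simp [lidSeq, show m % 4 ≠ 1 from by omega, hd]
lemma lidSeq_t3_7 (m j : ℕ) (h : m % 4 = 3) (hd : m - j = 7) : lidSeq m j = 0 := by simp [lidSeq, show m % 4 ≠ 1 from by omega, hd]
set_option maxHeartbeats 1000000 in
lemma lidSeq_core (m : ℕ) (hm2 : m % 2 = 1) (hm9 : 9 ≤ m) (i0 i1 i2 i3 : ℕ)
    (h0 : i0 < m) (h1 : i1 < m) (h2 : i2 < m) (h3 : i3 < m)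
    (s1 : i1 = i0 + 1 ∨ (i0 = m - 1 ∧ i1 = 0))
    (s2 : i2 = i1 + 1 ∨ (i1 = m - 1 ∧ i2 = 0))
    (s3 : i3 = i2 + 1 ∨ (i2 = m - 1 ∧ i3 = 0)) :
    lidSeq m i1 ≠ lidSeq m i2 ∧
    ((lidSeq m i0 ≠ lidSeq m i1 ∧ lidSeq m i0 ≠ lidSeq m i2 ∧ lidSeq m i0 ≠ lidSeq m i3) ∨
     (lidSeq m i3 ≠ lidSeq m i0 ∧ lidSeq m i3 ≠ lidSeq m i1 ∧ lidSeq m i3 ≠ lidSeq m i2)) := by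
  rcases (by omega : m % 4 = 1 ∨ m % 4 = 3) with hbr | hbr
  · rcases (by omega : (i0 + 9 ≤ m ∧ i0 % 4 = 0) ∨ (i0 + 9 ≤ m ∧ i0 % 4 = 1) ∨ (i0 + 9 ≤ m ∧ i0 % 4 = 2) ∨ (i0 + 9 ≤ m ∧ i0 % 4 = 3) ∨ i0 = m - 8 ∨ i0 = m - 7 ∨ i0 = m - 6 ∨ i0 = m - 5 ∨ i0 = m - 4 ∨ i0 = m - 3 ∨ i0 = m - 2 ∨ i0 = m - 1) with hc0 | hc1 | hc2 | hc3 | hc4 | hc5 | hc6 | hc7 | hc8 | hc9 | hc10 | hc11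
    · -- ('body', 0) [0, 1, 0, 2]
      have v0 : lidSeq m i0 = 0 := by rw [lidSeq_pat1 m i0 hbr (by omega), lidPat_0 i0 (by omega)]
      have v1 : lidSeq m i1 = 1 := by rw [lidSeq_pat1 m i1 hbr (by omega), lidPat_1 i1 (by omega)]
      have v2 : lidSeq m i2 = 0 := by rw [lidSeq_pat1 m i2 hbr (by omega), lidPat_2 i2 (by omega)]
      have v3 : lidSeq m i3 = 2 := by rw [lidSeq_pat1 m i3 hbr (by omega), lidPat_3 i3 (by omega)]
      rw [v0, v1, v2, v3]
      exact ⟨by decide, Or.inr (by decide)⟩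
    · -- ('body', 1) [1, 0, 2, 0]
      have v0 : lidSeq m i0 = 1 := by rw [lidSeq_pat1 m i0 hbr (by omega), lidPat_1 i0 (by omega)]
      have v1 : lidSeq m i1 = 0 := by rw [lidSeq_pat1 m i1 hbr (by omega), lidPat_2 i1 (by omega)]
      have v2 : lidSeq m i2 = 2 := by rw [lidSeq_pat1 m i2 hbr (by omega), lidPat_3 i2 (by omega)]
      have v3 : lidSeq m i3 = 0 := by rw [lidSeq_pat1 m i3 hbr (by omega), lidPat_0 i3 (by omega)]
      rw [v0, v1, v2, v3]
      exact ⟨by decide, Or.inl (by decide)⟩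
    · -- ('body', 2) [0, 2, 0, 1]
      have v0 : lidSeq m i0 = 0 := by rw [lidSeq_pat1 m i0 hbr (by omega), lidPat_2 i0 (by omega)]
      have v1 : lidSeq m i1 = 2 := by rw [lidSeq_pat1 m i1 hbr (by omega), lidPat_3 i1 (by omega)]
      have v2 : lidSeq m i2 = 0 := by rw [lidSeq_pat1 m i2 hbr (by omega), lidPat_0 i2 (by omega)]
      have v3 : lidSeq m i3 = 1 := by rw [lidSeq_pat1 m i3 hbr (by omega), lidPat_1 i3 (by omega)]
      rw [v0, v1, v2, v3]
      exact ⟨by decide, Or.inr (by decide)⟩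
    · -- ('body', 3) [2, 0, 1, 0]
      have v0 : lidSeq m i0 = 2 := by rw [lidSeq_pat1 m i0 hbr (by omega), lidPat_3 i0 (by omega)]
      have v1 : lidSeq m i1 = 0 := by rw [lidSeq_pat1 m i1 hbr (by omega), lidPat_0 i1 (by omega)]
      have v2 : lidSeq m i2 = 1 := by rw [lidSeq_pat1 m i2 hbr (by omega), lidPat_1 i2 (by omega)]
      have v3 : lidSeq m i3 = 0 := by rw [lidSeq_pat1 m i3 hbr (by omega), lidPat_2 i3 (by omega)]
      rw [v0, v1, v2, v3]
      exact ⟨by decide, Or.inl (by decide)⟩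
    · -- ('bnd', 8) [1, 0, 2, 0]
      have v0 : lidSeq m i0 = 1 := by rw [lidSeq_pat1 m i0 hbr (by omega), lidPat_1 i0 (by omega)]
      have v1 : lidSeq m i1 = 0 := by rw [lidSeq_pat1 m i1 hbr (by omega), lidPat_2 i1 (by omega)]
      have v2 : lidSeq m i2 = 2 := by rw [lidSeq_pat1 m i2 hbr (by omega), lidPat_3 i2 (by omega)]
      have v3 : lidSeq m i3 = 0 := lidSeq_t1_5 m i3 hbr (by omega)
      rw [v0, v1, v2, v3]
      exact ⟨by decide, Or.inl (by decide)⟩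
    · -- ('bnd', 7) [0, 2, 0, 1]
      have v0 : lidSeq m i0 = 0 := by rw [lidSeq_pat1 m i0 hbr (by omega), lidPat_2 i0 (by omega)]
      have v1 : lidSeq m i1 = 2 := by rw [lidSeq_pat1 m i1 hbr (by omega), lidPat_3 i1 (by omega)]
      have v2 : lidSeq m i2 = 0 := lidSeq_t1_5 m i2 hbr (by omega)
      have v3 : lidSeq m i3 = 1 := lidSeq_t1_4 m i3 hbr (by omega)
      rw [v0, v1, v2, v3]
      exact ⟨by decide, Or.inr (by decide)⟩
    · -- ('bnd', 6) [2, 0, 1, 3]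
      have v0 : lidSeq m i0 = 2 := by rw [lidSeq_pat1 m i0 hbr (by omega), lidPat_3 i0 (by omega)]
      have v1 : lidSeq m i1 = 0 := lidSeq_t1_5 m i1 hbr (by omega)
      have v2 : lidSeq m i2 = 1 := lidSeq_t1_4 m i2 hbr (by omega)
      have v3 : lidSeq m i3 = 3 := lidSeq_t1_3 m i3 hbr (by omega)
      rw [v0, v1, v2, v3]
      exact ⟨by decide, Or.inl (by decide)⟩
    · -- ('bnd', 5) [0, 1, 3, 2]
      have v0 : lidSeq m i0 = 0 := lidSeq_t1_5 m i0 hbr (by omega)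
      have v1 : lidSeq m i1 = 1 := lidSeq_t1_4 m i1 hbr (by omega)
      have v2 : lidSeq m i2 = 3 := lidSeq_t1_3 m i2 hbr (by omega)
      have v3 : lidSeq m i3 = 2 := lidSeq_t1_2 m i3 hbr (by omega)
      rw [v0, v1, v2, v3]
      exact ⟨by decide, Or.inl (by decide)⟩
    · -- ('bnd', 4) [1, 3, 2, 3]
      have v0 : lidSeq m i0 = 1 := lidSeq_t1_4 m i0 hbr (by omega)
      have v1 : lidSeq m i1 = 3 := lidSeq_t1_3 m i1 hbr (by omega)
      have v2 : lidSeq m i2 = 2 := lidSeq_t1_2 m i2 hbr (by omega)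
      have v3 : lidSeq m i3 = 3 := lidSeq_t1_1 m i3 hbr (by omega)
      rw [v0, v1, v2, v3]
      exact ⟨by decide, Or.inl (by decide)⟩
    · -- ('bnd', 3) [3, 2, 3, 0]
      have v0 : lidSeq m i0 = 3 := lidSeq_t1_3 m i0 hbr (by omega)
      have v1 : lidSeq m i1 = 2 := lidSeq_t1_2 m i1 hbr (by omega)
      have v2 : lidSeq m i2 = 3 := lidSeq_t1_1 m i2 hbr (by omega)
      have v3 : lidSeq m i3 = 0 := by rw [lidSeq_pat1 m i3 hbr (by omega), lidPat_0 i3 (by omega)]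
      rw [v0, v1, v2, v3]
      exact ⟨by decide, Or.inr (by decide)⟩
    · -- ('bnd', 2) [2, 3, 0, 1]
      have v0 : lidSeq m i0 = 2 := lidSeq_t1_2 m i0 hbr (by omega)
      have v1 : lidSeq m i1 = 3 := lidSeq_t1_1 m i1 hbr (by omega)
      have v2 : lidSeq m i2 = 0 := by rw [lidSeq_pat1 m i2 hbr (by omega), lidPat_0 i2 (by omega)]
      have v3 : lidSeq m i3 = 1 := by rw [lidSeq_pat1 m i3 hbr (by omega), lidPat_1 i3 (by omega)]
      rw [v0, v1, v2, v3]
      exact ⟨by decide, Or.inl (by decide)⟩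
    · -- ('bnd', 1) [3, 0, 1, 0]
      have v0 : lidSeq m i0 = 3 := lidSeq_t1_1 m i0 hbr (by omega)
      have v1 : lidSeq m i1 = 0 := by rw [lidSeq_pat1 m i1 hbr (by omega), lidPat_0 i1 (by omega)]
      have v2 : lidSeq m i2 = 1 := by rw [lidSeq_pat1 m i2 hbr (by omega), lidPat_1 i2 (by omega)]
      have v3 : lidSeq m i3 = 0 := by rw [lidSeq_pat1 m i3 hbr (by omega), lidPat_2 i3 (by omega)]
      rw [v0, v1, v2, v3]
      exact ⟨by decide, Or.inl (by decide)⟩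
  · rcases (by omega : (i0 + 11 ≤ m ∧ i0 % 4 = 0) ∨ (i0 + 11 ≤ m ∧ i0 % 4 = 1) ∨ (i0 + 11 ≤ m ∧ i0 % 4 = 2) ∨ (i0 + 11 ≤ m ∧ i0 % 4 = 3) ∨ i0 = m - 10 ∨ i0 = m - 9 ∨ i0 = m - 8 ∨ i0 = m - 7 ∨ i0 = m - 6 ∨ i0 = m - 5 ∨ i0 = m - 4 ∨ i0 = m - 3 ∨ i0 = m - 2 ∨ i0 = m - 1) with hc0 | hc1 | hc2 | hc3 | hc4 | hc5 | hc6 | hc7 | hc8 | hc9 | hc10 | hc11 | hc12 | hc13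
    · -- ('body', 0) [0, 1, 0, 2]
      have v0 : lidSeq m i0 = 0 := by rw [lidSeq_pat3 m i0 hbr (by omega), lidPat_0 i0 (by omega)]
      have v1 : lidSeq m i1 = 1 := by rw [lidSeq_pat3 m i1 hbr (by omega), lidPat_1 i1 (by omega)]
      have v2 : lidSeq m i2 = 0 := by rw [lidSeq_pat3 m i2 hbr (by omega), lidPat_2 i2 (by omega)]
      have v3 : lidSeq m i3 = 2 := by rw [lidSeq_pat3 m i3 hbr (by omega), lidPat_3 i3 (by omega)]
      rw [v0, v1, v2, v3]
      exact ⟨by decide, Or.inr (by decide)⟩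
    · -- ('body', 1) [1, 0, 2, 0]
      have v0 : lidSeq m i0 = 1 := by rw [lidSeq_pat3 m i0 hbr (by omega), lidPat_1 i0 (by omega)]
      have v1 : lidSeq m i1 = 0 := by rw [lidSeq_pat3 m i1 hbr (by omega), lidPat_2 i1 (by omega)]
      have v2 : lidSeq m i2 = 2 := by rw [lidSeq_pat3 m i2 hbr (by omega), lidPat_3 i2 (by omega)]
      have v3 : lidSeq m i3 = 0 := by rw [lidSeq_pat3 m i3 hbr (by omega), lidPat_0 i3 (by omega)]
      rw [v0, v1, v2, v3]
      exact ⟨by decide, Or.inl (by decide)⟩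
    · -- ('body', 2) [0, 2, 0, 1]
      have v0 : lidSeq m i0 = 0 := by rw [lidSeq_pat3 m i0 hbr (by omega), lidPat_2 i0 (by omega)]
      have v1 : lidSeq m i1 = 2 := by rw [lidSeq_pat3 m i1 hbr (by omega), lidPat_3 i1 (by omega)]
      have v2 : lidSeq m i2 = 0 := by rw [lidSeq_pat3 m i2 hbr (by omega), lidPat_0 i2 (by omega)]
      have v3 : lidSeq m i3 = 1 := by rw [lidSeq_pat3 m i3 hbr (by omega), lidPat_1 i3 (by omega)]
      rw [v0, v1, v2, v3]
      exact ⟨by decide, Or.inr (by decide)⟩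
    · -- ('body', 3) [2, 0, 1, 0]
      have v0 : lidSeq m i0 = 2 := by rw [lidSeq_pat3 m i0 hbr (by omega), lidPat_3 i0 (by omega)]
      have v1 : lidSeq m i1 = 0 := by rw [lidSeq_pat3 m i1 hbr (by omega), lidPat_0 i1 (by omega)]
      have v2 : lidSeq m i2 = 1 := by rw [lidSeq_pat3 m i2 hbr (by omega), lidPat_1 i2 (by omega)]
      have v3 : lidSeq m i3 = 0 := by rw [lidSeq_pat3 m i3 hbr (by omega), lidPat_2 i3 (by omega)]
      rw [v0, v1, v2, v3]
      exact ⟨by decide, Or.inl (by decide)⟩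
    · -- ('bnd', 10) [1, 0, 2, 0]
      have v0 : lidSeq m i0 = 1 := by rw [lidSeq_pat3 m i0 hbr (by omega), lidPat_1 i0 (by omega)]
      have v1 : lidSeq m i1 = 0 := by rw [lidSeq_pat3 m i1 hbr (by omega), lidPat_2 i1 (by omega)]
      have v2 : lidSeq m i2 = 2 := by rw [lidSeq_pat3 m i2 hbr (by omega), lidPat_3 i2 (by omega)]
      have v3 : lidSeq m i3 = 0 := lidSeq_t3_7 m i3 hbr (by omega)
      rw [v0, v1, v2, v3]
      exact ⟨by decide, Or.inl (by decide)⟩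
    · -- ('bnd', 9) [0, 2, 0, 1]
      have v0 : lidSeq m i0 = 0 := by rw [lidSeq_pat3 m i0 hbr (by omega), lidPat_2 i0 (by omega)]
      have v1 : lidSeq m i1 = 2 := by rw [lidSeq_pat3 m i1 hbr (by omega), lidPat_3 i1 (by omega)]
      have v2 : lidSeq m i2 = 0 := lidSeq_t3_7 m i2 hbr (by omega)
      have v3 : lidSeq m i3 = 1 := lidSeq_t3_6 m i3 hbr (by omega)
      rw [v0, v1, v2, v3]
      exact ⟨by decide, Or.inr (by decide)⟩
    · -- ('bnd', 8) [2, 0, 1, 3]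
      have v0 : lidSeq m i0 = 2 := by rw [lidSeq_pat3 m i0 hbr (by omega), lidPat_3 i0 (by omega)]
      have v1 : lidSeq m i1 = 0 := lidSeq_t3_7 m i1 hbr (by omega)
      have v2 : lidSeq m i2 = 1 := lidSeq_t3_6 m i2 hbr (by omega)
      have v3 : lidSeq m i3 = 3 := lidSeq_t3_5 m i3 hbr (by omega)
      rw [v0, v1, v2, v3]
      exact ⟨by decide, Or.inl (by decide)⟩
    · -- ('bnd', 7) [0, 1, 3, 1]
      have v0 : lidSeq m i0 = 0 := lidSeq_t3_7 m i0 hbr (by omega)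
      have v1 : lidSeq m i1 = 1 := lidSeq_t3_6 m i1 hbr (by omega)
      have v2 : lidSeq m i2 = 3 := lidSeq_t3_5 m i2 hbr (by omega)
      have v3 : lidSeq m i3 = 1 := lidSeq_t3_4 m i3 hbr (by omega)
      rw [v0, v1, v2, v3]
      exact ⟨by decide, Or.inl (by decide)⟩
    · -- ('bnd', 6) [1, 3, 1, 2]
      have v0 : lidSeq m i0 = 1 := lidSeq_t3_6 m i0 hbr (by omega)
      have v1 : lidSeq m i1 = 3 := lidSeq_t3_5 m i1 hbr (by omega)
      have v2 : lidSeq m i2 = 1 := lidSeq_t3_4 m i2 hbr (by omega)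
      have v3 : lidSeq m i3 = 2 := lidSeq_t3_3 m i3 hbr (by omega)
      rw [v0, v1, v2, v3]
      exact ⟨by decide, Or.inr (by decide)⟩
    · -- ('bnd', 5) [3, 1, 2, 0]
      have v0 : lidSeq m i0 = 3 := lidSeq_t3_5 m i0 hbr (by omega)
      have v1 : lidSeq m i1 = 1 := lidSeq_t3_4 m i1 hbr (by omega)
      have v2 : lidSeq m i2 = 2 := lidSeq_t3_3 m i2 hbr (by omega)
      have v3 : lidSeq m i3 = 0 := lidSeq_t3_2 m i3 hbr (by omega)
      rw [v0, v1, v2, v3]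
      exact ⟨by decide, Or.inl (by decide)⟩
    · -- ('bnd', 4) [1, 2, 0, 3]
      have v0 : lidSeq m i0 = 1 := lidSeq_t3_4 m i0 hbr (by omega)
      have v1 : lidSeq m i1 = 2 := lidSeq_t3_3 m i1 hbr (by omega)
      have v2 : lidSeq m i2 = 0 := lidSeq_t3_2 m i2 hbr (by omega)
      have v3 : lidSeq m i3 = 3 := lidSeq_t3_1 m i3 hbr (by omega)
      rw [v0, v1, v2, v3]
      exact ⟨by decide, Or.inl (by decide)⟩
    · -- ('bnd', 3) [2, 0, 3, 0]
      have v0 : lidSeq m i0 = 2 := lidSeq_t3_3 m i0 hbr (by omega)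
      have v1 : lidSeq m i1 = 0 := lidSeq_t3_2 m i1 hbr (by omega)
      have v2 : lidSeq m i2 = 3 := lidSeq_t3_1 m i2 hbr (by omega)
      have v3 : lidSeq m i3 = 0 := by rw [lidSeq_pat3 m i3 hbr (by omega), lidPat_0 i3 (by omega)]
      rw [v0, v1, v2, v3]
      exact ⟨by decide, Or.inl (by decide)⟩
    · -- ('bnd', 2) [0, 3, 0, 1]
      have v0 : lidSeq m i0 = 0 := lidSeq_t3_2 m i0 hbr (by omega)
      have v1 : lidSeq m i1 = 3 := lidSeq_t3_1 m i1 hbr (by omega)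
      have v2 : lidSeq m i2 = 0 := by rw [lidSeq_pat3 m i2 hbr (by omega), lidPat_0 i2 (by omega)]
      have v3 : lidSeq m i3 = 1 := by rw [lidSeq_pat3 m i3 hbr (by omega), lidPat_1 i3 (by omega)]
      rw [v0, v1, v2, v3]
      exact ⟨by decide, Or.inr (by decide)⟩
    · -- ('bnd', 1) [3, 0, 1, 0]
      have v0 : lidSeq m i0 = 3 := lidSeq_t3_1 m i0 hbr (by omega)
      have v1 : lidSeq m i1 = 0 := by rw [lidSeq_pat3 m i1 hbr (by omega), lidPat_0 i1 (by omega)]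
      have v2 : lidSeq m i2 = 1 := by rw [lidSeq_pat3 m i2 hbr (by omega), lidPat_1 i2 (by omega)]
      have v3 : lidSeq m i3 = 0 := by rw [lidSeq_pat3 m i3 hbr (by omega), lidPat_2 i3 (by omega)]
      rw [v0, v1, v2, v3]
      exact ⟨by decide, Or.inl (by decide)⟩

/-! ### Generic lemmas about the tensor product of two cycles -/

section Cycles

variable {a b : ℕ}

lemma tensor_cycle_adj {u w : Fin (a+2) × Fin (b+2)} :
    ((cycleGraph (a+2)).tensorProd (cycleGraph (b+2))).Adj u w ↔
      ((u.1 - w.1 = 1 ∨ w.1 - u.1 = 1) ∧ (u.2 - w.2 = 1 ∨ w.2 - u.2 = 1)) := by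
  show (cycleGraph (a+2)).Adj u.1 w.1 ∧ (cycleGraph (b+2)).Adj u.2 w.2 ↔ _
  rw [cycleGraph_adj, cycleGraph_adj]

lemma mem_closedNbhd_iff {V : Type*} {G : SimpleGraph V} {v p : V} :
    p ∈ G.closedNbhd v ↔ p = v ∨ G.Adj v p := by
  simp [SimpleGraph.closedNbhd]

lemma fin_one_ne_zero' (h : 9 ≤ a + 2) : (1 : Fin (a+2)) ≠ 0 := by
  intro hh
  have := congrArg Fin.val hh
  rw [Fin.val_one, Fin.val_zero] at this
  omega

lemma fin_two_ne_zero' (h : 9 ≤ a + 2) : (1 + 1 : Fin (a+2)) ≠ 0 := by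
  intro hh
  have := congrArg Fin.val hh
  rw [Fin.val_add, Fin.val_one, Fin.val_zero] at this
  rw [Nat.mod_eq_of_lt (by omega)] at this
  omega

lemma fin_three_ne_zero' (h : 9 ≤ a + 2) : (1 + 1 + 1 : Fin (a+2)) ≠ 0 := by
  intro hh
  have := congrArg Fin.val hh
  rw [Fin.val_add, Fin.val_add, Fin.val_one, Fin.val_zero] at this
  rw [Nat.mod_eq_of_lt (show 1 + 1 < a + 2 by omega)] at this
  rw [Nat.mod_eq_of_lt (by omega)] at this
  omega

/-- In `C_m × C_n` (with `m ≥ 9`), adjacent vertices have distinct closed neighborhoods. -/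
lemma tensor_closedNbhd_ne (h9 : 9 ≤ a + 2) {u w : Fin (a+2) × Fin (b+2)}
    (hadj : ((cycleGraph (a+2)).tensorProd (cycleGraph (b+2))).Adj u w) :
    ((cycleGraph (a+2)).tensorProd (cycleGraph (b+2))).closedNbhd u ≠
      ((cycleGraph (a+2)).tensorProd (cycleGraph (b+2))).closedNbhd w := by
  set G := (cycleGraph (a+2)).tensorProd (cycleGraph (b+2)) with hG
  intro h
  obtain ⟨h1, h2⟩ := tensor_cycle_adj.mp hadj
  set p : Fin (a+2) × Fin (b+2) := (u.1 + (u.1 - w.1), u.2 + (u.2 - w.2)) with hp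
  have hpadj : G.Adj u p := by
    rw [tensor_cycle_adj]
    constructor
    · rcases h1 with h1 | h1
      · right
        show u.1 + (u.1 - w.1) - u.1 = 1
        rw [← h1]; ring
      · left
        show u.1 - (u.1 + (u.1 - w.1)) = 1
        rw [← h1]; ring
    · rcases h2 with h2 | h2
      · right
        show u.2 + (u.2 - w.2) - u.2 = 1
        rw [← h2]; ring
      · left
        show u.2 - (u.2 + (u.2 - w.2)) = 1
        rw [← h2]; ring
  have hpu : p ∈ G.closedNbhd u := mem_closedNbhd_iff.mpr (Or.inr hpadj)
  rw [h] at hpu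
  rcases mem_closedNbhd_iff.mp hpu with hpw | hpw
  · -- p = w : then 2*(u.1 - w.1) = 0 in Fin (a+2), impossible
    have hfst : u.1 + (u.1 - w.1) = w.1 := congrArg Prod.fst hpw
    rcases h1 with h1 | h1
    · exact fin_two_ne_zero' h9 (by linear_combination hfst - 2 * h1)
    · exact fin_two_ne_zero' h9 (by linear_combination -hfst - 2 * h1)
  · -- Adj w p : then 2*(u.1 - w.1) = ±1 in Fin (a+2), impossible
    obtain ⟨hf, -⟩ := tensor_cycle_adj.mp hpw
    rcases hf with hf | hf
    · -- w.1 - p.1 = 1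
      have hf' : w.1 - (u.1 + (u.1 - w.1)) = 1 := hf
      rcases h1 with h1 | h1
      · exact fin_three_ne_zero' h9 (by linear_combination -hf' - 2 * h1)
      · exact fin_one_ne_zero' h9 (by linear_combination hf' - 2 * h1)
    · -- p.1 - w.1 = 1
      have hf' : u.1 + (u.1 - w.1) - w.1 = 1 := hf
      rcases h1 with h1 | h1
      · exact fin_one_ne_zero' h9 (by linear_combination hf' - 2 * h1)
      · exact fin_three_ne_zero' h9 (by linear_combination -hf' - 2 * h1)

end Cycles
/-! ### The lower bound: no lid-coloring with 3 colors -/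

lemma fin3_triple : ∀ p q z y : Fin 3, p ≠ q → p ≠ z → q ≠ z → y ≠ z → y = p ∨ y = q := by
  decide

lemma set_eq_pair_of_not_full {S : Set (Fin 3)} {p q z : Fin 3}
    (hp : p ∈ S) (hq : q ∈ S) (hpq : p ≠ q) (hz : z ∉ S) : S = {p, q} := by
  ext y
  simp only [Set.mem_insert_iff, Set.mem_singleton_iff]
  constructor
  · intro hy
    exact fin3_triple p q z y hpq (fun h => hz (h ▸ hp)) (fun h => hz (h ▸ hq))
      (fun h => hz (h ▸ hy))
  · rintro (rfl | rfl) <;> assumption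

lemma lower_bound (a b : ℕ) (h9 : 9 ≤ a + 2) (ha2 : (a + 2) % 2 = 1) (hb2 : (b + 2) % 2 = 1) :
    ¬ ((cycleGraph (a+2)).tensorProd (cycleGraph (b+2))).LidColorable 3 := by
  rintro ⟨f, hf1, hf2⟩
  set G := (cycleGraph (a+2)).tensorProd (cycleGraph (b+2)) with hG
  -- the indicator "all three colors appear on the closed neighborhood"
  set g : Fin (a+2) × Fin (b+2) → Prop :=
    fun v => ∀ x : Fin 3, x ∈ f '' G.closedNbhd v with hg
  -- along any edge, the indicator flips
  have hB : ∀ u w, G.Adj u w → (g u ↔ ¬ g w) := by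
    intro u w hadj
    have hne := tensor_closedNbhd_ne h9 hadj
    have himg := hf2 hadj hne
    have hu_u : f u ∈ f '' G.closedNbhd u := ⟨u, mem_closedNbhd_iff.mpr (Or.inl rfl), rfl⟩
    have hw_u : f w ∈ f '' G.closedNbhd u := ⟨w, mem_closedNbhd_iff.mpr (Or.inr hadj), rfl⟩
    have hu_w : f u ∈ f '' G.closedNbhd w := ⟨u, mem_closedNbhd_iff.mpr (Or.inr hadj.symm), rfl⟩
    have hw_w : f w ∈ f '' G.closedNbhd w := ⟨w, mem_closedNbhd_iff.mpr (Or.inl rfl), rfl⟩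
    have hfuw : f u ≠ f w := hf1 hadj
    constructor
    · intro hgu hgw
      apply himg
      ext x
      exact iff_of_true (hgu x) (hgw x)
    · intro hgw
      by_contra hgu
      apply himg
      obtain ⟨x0, hx0⟩ := not_forall.mp hgu
      obtain ⟨x1, hx1⟩ := not_forall.mp hgw
      rw [set_eq_pair_of_not_full hu_u hw_u hfuw hx0,
        set_eq_pair_of_not_full hu_w hw_w hfuw hx1]
  -- the diagonal closed walk
  set W : ℕ → Fin (a+2) × Fin (b+2) := fun t => ((t : Fin (a+2)), (t : Fin (b+2))) with hW
  have hadjW : ∀ t : ℕ, G.Adj (W t) (W (t+1)) := by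
    intro t
    rw [hG, tensor_cycle_adj]
    constructor
    · right; show ((t+1 : ℕ) : Fin (a+2)) - ((t : ℕ) : Fin (a+2)) = 1; push_cast; ring
    · right; show ((t+1 : ℕ) : Fin (b+2)) - ((t : ℕ) : Fin (b+2)) = 1; push_cast; ring
  have heven : ∀ t : ℕ, (g (W (2*t)) ↔ g (W 0)) := by
    intro t
    induction t with
    | zero => rfl
    | succ k ih =>
      have e1 := hB _ _ (hadjW (2*k))
      have e2 := hB _ _ (hadjW (2*k+1))
      have e3 : 2*(k+1) = 2*k+1+1 := by ring
      rw [e3]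
      tauto
  obtain ⟨k, hk⟩ : ∃ k, (a+2)*(b+2) = 2*k+1 := by
    have : Odd ((a+2)*(b+2)) := (Nat.odd_iff.mpr ha2).mul (Nat.odd_iff.mpr hb2)
    obtain ⟨k, hk⟩ := this
    exact ⟨k, by omega⟩
  have hW0 : W ((a+2)*(b+2)) = W 0 := by
    rw [hW]
    have e1 : (((a+2)*(b+2) : ℕ) : Fin (a+2)) = 0 := by rw [Nat.cast_mul]; simp
    have e2 : (((a+2)*(b+2) : ℕ) : Fin (b+2)) = 0 := by rw [Nat.cast_mul]; simp
    simp [e1, e2]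
  have h1 := heven k
  have h2 := hB _ _ (hadjW (2*k))
  rw [show 2*k+1 = (a+2)*(b+2) from hk.symm, hW0] at h2
  tauto
/-! ### The upper bound: a lid-coloring with 4 colors -/

lemma set_ne_of_witness (p q r s : Fin 4)
    (h : (p ≠ q ∧ p ≠ r ∧ p ≠ s) ∨ (s ≠ p ∧ s ≠ q ∧ s ≠ r)) :
    ({p, q, r} : Set (Fin 4)) ≠ {q, r, s} := by
  rcases h with ⟨h1, h2, h3⟩ | ⟨h1, h2, h3⟩
  · intro he
    have hm : p ∈ ({q, r, s} : Set (Fin 4)) :=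
      he ▸ (by simp : p ∈ ({p, q, r} : Set (Fin 4)))
    simp only [Set.mem_insert_iff, Set.mem_singleton_iff] at hm
    tauto
  · intro he
    have hm : s ∈ ({p, q, r} : Set (Fin 4)) :=
      he.symm ▸ (by simp : s ∈ ({q, r, s} : Set (Fin 4)))
    simp only [Set.mem_insert_iff, Set.mem_singleton_iff] at hm
    tauto

section UB

variable {a b : ℕ}

/-- The image of a closed neighborhood in `C_m × C_n` under a coloring depending only on the
first coordinate. -/
lemma image_closedNbhd (c : Fin (a+2) → Fin 4) (v : Fin (a+2) × Fin (b+2)) :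
    (fun p : Fin (a+2) × Fin (b+2) => c p.1) ''
        ((cycleGraph (a+2)).tensorProd (cycleGraph (b+2))).closedNbhd v =
      {c (v.1 - 1), c v.1, c (v.1 + 1)} := by
  ext x
  simp only [Set.mem_image, Set.mem_insert_iff, Set.mem_singleton_iff]
  constructor
  · rintro ⟨p, hp, rfl⟩
    rcases mem_closedNbhd_iff.mp hp with rfl | hadj
    · exact Or.inr (Or.inl rfl)
    · obtain ⟨hf, -⟩ := tensor_cycle_adj.mp hadj
      rcases hf with hf | hf
      · exact Or.inl (congrArg c (by linear_combination -hf))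
      · exact Or.inr (Or.inr (congrArg c (by linear_combination hf)))
  · rintro (h | h | h)
    · refine ⟨(v.1 - 1, v.2 - 1), mem_closedNbhd_iff.mpr (Or.inr ?_), h.symm⟩
      exact tensor_cycle_adj.mpr ⟨Or.inl (sub_sub_cancel v.1 1), Or.inl (sub_sub_cancel v.2 1)⟩
    · exact ⟨v, mem_closedNbhd_iff.mpr (Or.inl rfl), h.symm⟩
    · refine ⟨(v.1 + 1, v.2 + 1), mem_closedNbhd_iff.mpr (Or.inr ?_), h.symm⟩
      exact tensor_cycle_adj.mpr ⟨Or.inr (add_sub_cancel_left v.1 1), Or.inr (add_sub_cancel_left v.2 1)⟩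

/-- Successor relation for values of `Fin` elements. -/
lemma fin_succ_rel (x : Fin (a+2)) :
    (x + 1).val = x.val + 1 ∨ (x.val = (a+2) - 1 ∧ (x+1).val = 0) := by
  by_cases hx : x = Fin.last (a+1)
  · exact Or.inr ⟨by rw [hx]; simp, by rw [Fin.val_add_one, if_pos hx]⟩
  · exact Or.inl (by rw [Fin.val_add_one, if_neg hx])

/-- Core consequence of `lidSeq_core` for four consecutive vertices of the cycle. -/
lemma lidSeq_window (h9 : 9 ≤ a + 2) (h2 : (a + 2) % 2 = 1) (x : Fin (a+2)) :
    lidSeq (a+2) x.val ≠ lidSeq (a+2) (x+1).val ∧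
    ((lidSeq (a+2) (x-1).val ≠ lidSeq (a+2) x.val ∧
      lidSeq (a+2) (x-1).val ≠ lidSeq (a+2) (x+1).val ∧
      lidSeq (a+2) (x-1).val ≠ lidSeq (a+2) (x+1+1).val) ∨
     (lidSeq (a+2) (x+1+1).val ≠ lidSeq (a+2) (x-1).val ∧
      lidSeq (a+2) (x+1+1).val ≠ lidSeq (a+2) x.val ∧
      lidSeq (a+2) (x+1+1).val ≠ lidSeq (a+2) (x+1).val)) := by
  have e0 : x - 1 + 1 = x := sub_add_cancel x 1
  have s1 := fin_succ_rel (x - 1)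
  rw [e0] at s1
  have s2 := fin_succ_rel x
  have s3 := fin_succ_rel (x + 1)
  exact lidSeq_core (a+2) h2 h9 (x-1).val x.val (x+1).val (x+1+1).val
    (x-1).is_lt x.is_lt (x+1).is_lt (x+1+1).is_lt s1 s2 s3

/-- Half of the lid condition: the case where `w.1 = u.1 + 1`. -/
lemma ub_half (h9 : 9 ≤ a + 2) (h2 : (a + 2) % 2 = 1)
    {u w : Fin (a+2) × Fin (b+2)} (hw : w.1 = u.1 + 1) :
    (fun p : Fin (a+2) × Fin (b+2) => lidSeq (a+2) p.1.val) ''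
        ((cycleGraph (a+2)).tensorProd (cycleGraph (b+2))).closedNbhd u ≠
      (fun p : Fin (a+2) × Fin (b+2) => lidSeq (a+2) p.1.val) ''
        ((cycleGraph (a+2)).tensorProd (cycleGraph (b+2))).closedNbhd w := by
  rw [image_closedNbhd (fun i => lidSeq (a+2) i.val) u,
    image_closedNbhd (fun i => lidSeq (a+2) i.val) w]
  rw [hw, add_sub_cancel_right u.1 1]
  exact set_ne_of_witness _ _ _ _ (lidSeq_window h9 h2 u.1).2

lemma upper_bound (h9 : 9 ≤ a + 2) (h2 : (a + 2) % 2 = 1) :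
    ((cycleGraph (a+2)).tensorProd (cycleGraph (b+2))).LidColorable 4 := by
  refine ⟨fun p => lidSeq (a+2) p.1.val, ?_, ?_⟩
  · -- proper
    intro u w hadj
    obtain ⟨hf, -⟩ := tensor_cycle_adj.mp hadj
    rcases hf with hf | hf
    · have hu : u.1 = w.1 + 1 := by linear_combination hf
      have := (lidSeq_window h9 h2 w.1).1
      rw [← hu] at this
      exact this.symm
    · have hww : w.1 = u.1 + 1 := by linear_combination hf
      have := (lidSeq_window h9 h2 u.1).1
      rw [← hww] at this
      exact this
  · -- locally identifying
    intro u w hadj _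
    obtain ⟨hf, -⟩ := tensor_cycle_adj.mp hadj
    rcases hf with hf | hf
    · have hu : u.1 = w.1 + 1 := by linear_combination hf
      exact (ub_half h9 h2 hu).symm
    · have hww : w.1 = u.1 + 1 := by linear_combination hf
      exact ub_half h9 h2 hww

end UB

/-! ### Main theorem -/

/-- For odd `m ≥ 9` and odd `n ≥ 3`, `χ_lid(C_m × C_n) = 4`. -/
theorem lid_stmt_18 (m n : ℕ) (hm : Odd m) (hn : Odd n) (hm9 : 9 ≤ m) (hn3 : 3 ≤ n) :
    ((cycleGraph m).tensorProd (cycleGraph n)).lidChromaticNumber = 4 := by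
  obtain ⟨a, rfl⟩ : ∃ a, m = a + 2 := ⟨m - 2, by omega⟩
  obtain ⟨b, rfl⟩ : ∃ b, n = b + 2 := ⟨n - 2, by omega⟩
  have ha2 : (a + 2) % 2 = 1 := Nat.odd_iff.mp hm
  have hb2 : (b + 2) % 2 = 1 := Nat.odd_iff.mp hn
  set G := (cycleGraph (a+2)).tensorProd (cycleGraph (b+2)) with hG
  have h4 : G.LidColorable 4 := upper_bound hm9 ha2
  have hnot3 : ¬ G.LidColorable 3 := lower_bound a b hm9 ha2 hb2
  have hmono : ∀ k : ℕ, G.LidColorable k → 4 ≤ k := by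
    intro k hk
    by_contra hlt
    push_neg at hlt
    obtain ⟨f, hp, hl⟩ := hk
    apply hnot3
    refine ⟨Fin.castLE (by omega : k ≤ 3) ∘ f, ?_, ?_⟩
    · intro u w h hE
      exact hp h (Fin.castLE_injective _ hE)
    · intro u w h hne hE
      apply hl h hne
      rw [Set.image_comp, Set.image_comp] at hE
      exact Set.image_injective.mpr (Fin.castLE_injective _) hE
  rw [SimpleGraph.lidChromaticNumber]
  apply le_antisymm
  · have := iInf₂_le (f := fun (k : ℕ) (_ : k ∈ {k : ℕ | G.LidColorable k}) => (k : ℕ∞)) 4 h4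
    simpa using this
  · refine le_iInf₂ fun k hk => ?_
    have := hmono k hk
    exact_mod_cast this
end
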